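/- Let P ⊆ ℂ be a parallelogram-free pattern with |P| ≥ 3. Then for every n ≥ 1 and every parallelogram-free set A ⊆ ℂ with |A| = n, S_P(A) ≤ n^{3/2} + n; that is, S_P^∦(n) ≤ n^{3/2} + n for all n. -/

import Mathlib

open MeasureTheory

noncomputable section

/-- `Q` is a similar copy of `P`: the image of `P` under an
orientation-preserving similarity `p ↦ z·p + w`, `z ≠ 0`. -/
def SimilarCopy (P Q : Finset ℂ) : Prop :=
  ∃ z w : ℂ, z ≠ 0 ∧ (Q : Set ℂ) = (fun p => z * p + w) '' (P : Set ℂ)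

/-- `SP P Q` is the number of subsets of `Q` that are similar copies of `P`. -/
def SP (P Q : Finset ℂ) : ℕ :=
  letI := Classical.decPred (SimilarCopy P)
  (Q.powerset.filter (SimilarCopy P)).card

/-- `Q` has no `m` points on a line: every collinear subset has at most `m - 1` points. -/
def NoMOnLine (m : ℕ) (Q : Finset ℂ) : Prop :=
  ∀ S ⊆ Q, Collinear ℝ (S : Set ℂ) → S.card ≤ m - 1

/-- `Q` has `m` points on a line. -/
def HasMOnLine (m : ℕ) (Q : Finset ℂ) : Prop :=
  ∃ S ⊆ Q, S.card = m ∧ Collinear ℝ (S : Set ℂ)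

/-- The number of orientation-preserving isometries of `ℂ` mapping `P` onto itself,
i.e. maps `p ↦ u·p + w` with `|u| = 1` fixing `P` setwise. -/
def IsoPlusCard (P : Finset ℂ) : ℕ :=
  {uw : ℂ × ℂ | ‖uw.1‖ = 1 ∧
    (fun p => uw.1 * p + uw.2) '' (P : Set ℂ) = (P : Set ℂ)}.ncard

/-- The index of `A` with respect to the pattern `P`. -/
def indexP (P A : Finset ℂ) : ℝ :=
  Real.log ((IsoPlusCard P : ℝ) * SP P A + A.card) / Real.log A.card

/-- `SPnm P n m` : the maximum of `SP P Q` over `n`-point sets `Q`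
with no `m` points on a line. -/
def SPnm (P : Finset ℂ) (n m : ℕ) : ℕ :=
  sSup {k | ∃ Q : Finset ℂ, Q.card = n ∧ NoMOnLine m Q ∧ SP P Q = k}

/-- `SPn P n` : the maximum of `SP P Q` over all `n`-point sets `Q`. -/
def SPn (P : Finset ℂ) (n : ℕ) : ℕ :=
  sSup {k | ∃ Q : Finset ℂ, Q.card = n ∧ SP P Q = k}

/-- The Minkowski sum `B + C` of two finite sets of complex numbers. -/
def minkSum (B C : Finset ℂ) : Finset ℂ :=
  letI := Classical.decEq ℂ
  Finset.image₂ (· + ·) B C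

/-- `Q` contains four pairwise distinct points forming a parallelogram. -/
def HasParallelogram (Q : Finset ℂ) : Prop :=
  ∃ p₁ ∈ Q, ∃ p₂ ∈ Q, ∃ p₃ ∈ Q, ∃ p₄ ∈ Q,
    p₁ ≠ p₂ ∧ p₁ ≠ p₃ ∧ p₁ ≠ p₄ ∧ p₂ ≠ p₃ ∧ p₂ ≠ p₄ ∧ p₃ ≠ p₄ ∧
    p₂ - p₁ = p₄ - p₃

/-- `Q` is parallelogram-free: no 3 collinear points and no parallelogram. -/
def ParallelogramFree (Q : Finset ℂ) : Prop :=
  (∀ S ⊆ Q, Collinear ℝ (S : Set ℂ) → S.card ≤ 2) ∧ ¬ HasParallelogram Q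

/-- The set `Q(P, A, u, v) = ⋃_{p ∈ P} (u·p + (v·p − p + 1)·A)`. -/
def Qset (P A : Finset ℂ) (u v : ℂ) : Finset ℂ :=
  letI := Classical.decEq ℂ
  P.biUnion fun p => A.image fun a => u * p + (v * p - p + 1) * a

/-- The vertex set of the regular `k`-gon. -/
def Rpoly (k : ℕ) : Finset ℂ :=
  letI := Classical.decEq ℂ
  (Finset.range k).image fun j : ℕ => Complex.exp (2 * Real.pi * Complex.I * (j : ℂ) / (k : ℂ))

/-- `ω = e^{2πi/3}`. -/
def omega3 : ℂ := Complex.exp (2 * Real.pi * Complex.I / 3)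

/-- The vertex set `{1, ω, ω²}` of an equilateral triangle. -/
def triEq : Finset ℂ :=
  letI := Classical.decEq ℂ
  {1, omega3, omega3 ^ 2}

private lemma card_le_of_k22free (A : Finset ℂ) (E : Finset (ℂ × ℂ))
    (hn1 : 1 ≤ A.card)
    (hEA : ∀ e ∈ E, e.1 ∈ A ∧ e.2 ∈ A)
    (hE22 : ∀ a a' c c' : ℂ, a ≠ a' → c ≠ c' →
      (a, c) ∈ E → (a, c') ∈ E → (a', c) ∈ E → (a', c') ∈ E → False) :
    (E.card : ℝ) ≤ (A.card : ℝ) ^ ((3:ℝ)/2) + (A.card : ℝ) := by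
  classical
  set F : ℂ → Finset ℂ := fun a => A.filter fun c => (a, c) ∈ E with hF
  have hmemF : ∀ a c, c ∈ F a ↔ c ∈ A ∧ (a, c) ∈ E := by
    intro a c; simp [hF]
  -- E.card = ∑ fibers
  have hcardE : E.card = ∑ a ∈ A, (F a).card := by
    rw [Finset.card_eq_sum_card_fiberwise (f := Prod.fst) (t := A)
      (fun e he => (hEA e he).1)]
    refine Finset.sum_congr rfl fun a ha => ?_
    refine Finset.card_bij (fun e _ => e.2) ?_ ?_ ?_
    · intro e he
      simp only [Finset.mem_filter] at he
      rcases he with ⟨he, h1⟩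
      exact (hmemF a e.2).2 ⟨(hEA e he).2, by rw [← h1]; exact he⟩
    · intro e1 h1 e2 h2 h
      simp only [Finset.mem_filter] at h1 h2
      exact Prod.ext (h1.2.trans h2.2.symm) h
    · intro c hc
      rcases (hmemF a c).1 hc with ⟨_, hce⟩
      exact ⟨(a, c), by simp [hce], rfl⟩
  -- disjointness of offDiags
  have hdisj : ∀ x ∈ A, ∀ y ∈ A, x ≠ y → Disjoint ((F x).offDiag) ((F y).offDiag) := by
    intro x hx y hy hxy
    rw [Finset.disjoint_left]
    rintro ⟨c, c'⟩ h1 h2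
    rw [Finset.mem_offDiag] at h1 h2
    exact hE22 x y c c' hxy h1.2.2 ((hmemF x c).1 h1.1).2 ((hmemF x c').1 h1.2.1).2
      ((hmemF y c).1 h2.1).2 ((hmemF y c').1 h2.2.1).2
  have hsumoff : ∑ a ∈ A, ((F a).offDiag).card ≤ A.card * A.card - A.card := by
    rw [← Finset.card_biUnion hdisj, ← Finset.offDiag_card]
    apply Finset.card_le_card
    intro x hx
    simp only [Finset.mem_biUnion] at hx
    rcases hx with ⟨a, _, hx⟩
    rw [Finset.mem_offDiag] at hx ⊢
    exact ⟨((hmemF a x.1).1 hx.1).1, ((hmemF a x.2).1 hx.2.1).1, hx.2.2⟩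
  -- nat inequality on squares
  have hsq : ∑ a ∈ A, (F a).card * (F a).card ≤ (∑ a ∈ A, (F a).card) + A.card * A.card := by
    have h1 : ∀ a, (F a).card * (F a).card = ((F a).offDiag).card + (F a).card := by
      intro a
      rw [Finset.offDiag_card]
      have hle : (F a).card ≤ (F a).card * (F a).card := by nlinarith [Nat.zero_le (F a).card]
      omega
    calc ∑ a ∈ A, (F a).card * (F a).card
        = ∑ a ∈ A, (((F a).offDiag).card + (F a).card) := by
          exact Finset.sum_congr rfl fun a _ => h1 a
      _ = (∑ a ∈ A, ((F a).offDiag).card) + ∑ a ∈ A, (F a).card := Finset.sum_add_distrib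
      _ ≤ (A.card * A.card - A.card) + ∑ a ∈ A, (F a).card := by
          exact Nat.add_le_add_right hsumoff _
      _ ≤ (∑ a ∈ A, (F a).card) + A.card * A.card := by
          have := Nat.sub_le (A.card * A.card) A.card
          omega
  -- move to reals
  set n : ℝ := (A.card : ℝ) with hn
  set m : ℝ := (E.card : ℝ) with hm
  have hn0 : (0:ℝ) ≤ n := by positivity
  have hn1' : (1:ℝ) ≤ n := by rw [hn]; exact_mod_cast hn1
  have hm0 : (0:ℝ) ≤ m := by positivity
  have hmsum : m = ∑ a ∈ A, ((F a).card : ℝ) := by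
    rw [hm, hcardE]; push_cast; ring_nf
  have hsqR : ∑ a ∈ A, ((F a).card : ℝ)^2 ≤ m + n * n := by
    have := hsq
    have h2 : ((∑ a ∈ A, (F a).card * (F a).card : ℕ) : ℝ)
        ≤ (((∑ a ∈ A, (F a).card) + A.card * A.card : ℕ) : ℝ) := by exact_mod_cast this
    push_cast at h2
    calc ∑ a ∈ A, ((F a).card : ℝ)^2 = ∑ a ∈ A, ((F a).card : ℝ) * ((F a).card : ℝ) := by
          exact Finset.sum_congr rfl fun a _ => sq ((F a).card : ℝ)
      _ ≤ m + n * n := by rw [hmsum]; exact h2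
  -- Cauchy-Schwarz
  have hCS : m^2 ≤ n * ∑ a ∈ A, ((F a).card : ℝ)^2 := by
    have := Finset.sum_mul_sq_le_sq_mul_sq A (fun _ => (1:ℝ)) (fun a => ((F a).card : ℝ))
    simp only [one_mul, one_pow] at this
    rw [Finset.sum_const, nsmul_eq_mul, mul_one] at this
    rw [hmsum]
    exact this
  have hkey : m^2 ≤ n * m + n^3 := by nlinarith [hCS, hsqR]
  -- conclude
  set t : ℝ := n ^ ((3:ℝ)/2) with htdef
  have ht0 : (0:ℝ) ≤ t := Real.rpow_nonneg hn0 _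
  have ht2 : t^2 = n^3 := by
    rw [htdef, ← Real.rpow_natCast (n ^ ((3:ℝ)/2)) 2, ← Real.rpow_mul hn0,
      show (3:ℝ)/2 * ((2:ℕ):ℝ) = ((3:ℕ):ℝ) by push_cast; ring, Real.rpow_natCast]
  by_contra hcon
  push_neg at hcon
  have h1 : 0 < m - t - n := by
    rw [hm, hn, htdef] at hcon ⊢
    linarith [hcon]
  have h2 : 0 < m + t := by nlinarith
  nlinarith [mul_pos h1 h2, mul_nonneg hn0 ht0]

private lemma collinear_of_mid' {x y z : ℂ} (h : y - x = z - y) :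
    Collinear ℝ ({x, y, z} : Set ℂ) := by
  rw [collinear_iff_of_mem (Set.mem_insert x {y, z})]
  refine ⟨y - x, fun p hp => ?_⟩
  simp only [Set.mem_insert_iff, Set.mem_singleton_iff] at hp
  rcases hp with h1 | h1 | h1
  · exact ⟨0, by rw [h1]; simp⟩
  · exact ⟨1, by rw [h1, Complex.real_smul, vadd_eq_add]; push_cast; ring⟩
  · exact ⟨2, by rw [h1, Complex.real_smul, vadd_eq_add]; push_cast; linear_combination -h⟩

set_option maxHeartbeats 1000000 in
/-- Upper bound for parallelogram-free sets: if `P` is a parallelogram-free pattern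
with `|P| ≥ 3`, then every parallelogram-free `n`-set `A` (with `n ≥ 1`) satisfies
`S_P(A) ≤ n^{3/2} + n`. -/
theorem stmt18 (P : Finset ℂ) (hP : 3 ≤ P.card) (hPfree : ParallelogramFree P) :
    ∀ n : ℕ, 1 ≤ n → ∀ A : Finset ℂ, ParallelogramFree A → A.card = n →
      (SP P A : ℝ) ≤ (n : ℝ) ^ ((3 : ℝ) / 2) + (n : ℝ) := by
  classical
  intro n hn A hAfree hAcard
  obtain ⟨T, hTP, hT3⟩ := Finset.exists_subset_card_eq hP
  obtain ⟨p1, p2, p3, h12, h13, h23, rfl⟩ := Finset.card_eq_three.mp hT3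
  have hp1 : p1 ∈ P := hTP (by simp)
  have hp2 : p2 ∈ P := hTP (by simp)
  have hp3 : p3 ∈ P := hTP (by simp)
  have hp31 : p3 - p1 ≠ 0 := sub_ne_zero.mpr (Ne.symm h13)
  have hp21 : p2 - p1 ≠ 0 := sub_ne_zero.mpr (Ne.symm h12)
  have hp23 : p2 - p3 ≠ 0 := sub_ne_zero.mpr h23
  -- chosen similarity data
  let zw : Finset ℂ → ℂ × ℂ := fun S =>
    if h : SimilarCopy P S then (h.choose, h.choose_spec.choose) else (0, 0)
  have hzwspec : ∀ S, SimilarCopy P S →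
      (S : Set ℂ) = (fun p => (zw S).1 * p + (zw S).2) '' (P : Set ℂ) := by
    intro S h
    simp only [zw, dif_pos h]
    exact h.choose_spec.choose_spec.2
  set φ : Finset ℂ → ℂ × ℂ := fun S =>
    ((zw S).1 * p1 + (zw S).2, (zw S).1 * p3 + (zw S).2) with hφ
  set Fil := A.powerset.filter (SimilarCopy P) with hFil
  set E := Fil.image φ with hE
  have hSP : SP P A = Fil.card := by
    rw [hFil]
    unfold SP
    rw [Finset.filter_congr_decidable]
  have hFilmem : ∀ S ∈ Fil, S ⊆ A ∧ SimilarCopy P S := by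
    intro S hS
    rw [hFil, Finset.mem_filter, Finset.mem_powerset] at hS
    exact hS
  have hPmem : ∀ S ∈ Fil, ∀ p ∈ P, (zw S).1 * p + (zw S).2 ∈ A := by
    intro S hS p hp
    obtain ⟨hSA, hSsim⟩ := hFilmem S hS
    have hmem : (zw S).1 * p + (zw S).2 ∈ (S : Set ℂ) := by
      rw [hzwspec S hSsim]
      exact ⟨p, hp, rfl⟩
    exact hSA hmem
  have hinj : Set.InjOn φ (Fil : Set (Finset ℂ)) := by
    intro S1 hS1 S2 hS2 heq
    obtain ⟨_, hsim1⟩ := hFilmem S1 hS1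
    obtain ⟨_, hsim2⟩ := hFilmem S2 hS2
    rw [hφ] at heq
    have h1 : (zw S1).1 * p1 + (zw S1).2 = (zw S2).1 * p1 + (zw S2).2 :=
      congrArg Prod.fst heq
    have h3 : (zw S1).1 * p3 + (zw S1).2 = (zw S2).1 * p3 + (zw S2).2 :=
      congrArg Prod.snd heq
    have hz : (zw S1).1 = (zw S2).1 := by
      have : ((zw S1).1 - (zw S2).1) * (p3 - p1) = 0 := by linear_combination h3 - h1
      rcases mul_eq_zero.mp this with h | h
      · exact sub_eq_zero.mp h
      · exact absurd h hp31
    have hw : (zw S1).2 = (zw S2).2 := by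
      have h1' := h1
      rw [hz] at h1'
      exact add_left_cancel h1'
    apply Finset.coe_injective
    rw [hzwspec S1 hsim1, hzwspec S2 hsim2, hz, hw]
  have hcard : E.card = Fil.card := Finset.card_image_of_injOn hinj
  have hEspec : ∀ e ∈ E, ∃ z w : ℂ, e.1 = z * p1 + w ∧ e.2 = z * p3 + w ∧
      z * p1 + w ∈ A ∧ z * p2 + w ∈ A ∧ z * p3 + w ∈ A := by
    intro e he
    rw [hE, Finset.mem_image] at he
    obtain ⟨S, hS, rfl⟩ := he
    exact ⟨(zw S).1, (zw S).2, rfl, rfl, hPmem S hS p1 hp1, hPmem S hS p2 hp2,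
      hPmem S hS p3 hp3⟩
  have hEA : ∀ e ∈ E, e.1 ∈ A ∧ e.2 ∈ A := by
    intro e he
    obtain ⟨z, w, h1, h2, ha, _, hc⟩ := hEspec e he
    exact ⟨h1 ▸ ha, h2 ▸ hc⟩
  have hE22 : ∀ a a' c c' : ℂ, a ≠ a' → c ≠ c' →
      (a, c) ∈ E → (a, c') ∈ E → (a', c) ∈ E → (a', c') ∈ E → False := by
    intro a a' c c' haa hcc he1 he2 he3 he4
    obtain ⟨z1, w1, ha1, hc1, _, hb1, _⟩ := hEspec _ he1
    obtain ⟨z2, w2, ha2, hc2, _, hb2, _⟩ := hEspec _ he2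
    obtain ⟨z3, w3, ha3, hc3, _, hb3, _⟩ := hEspec _ he3
    obtain ⟨z4, w4, ha4, hc4, _, hb4, _⟩ := hEspec _ he4
    simp only at ha1 hc1 ha2 hc2 ha3 hc3 ha4 hc4
    have hccne : c - c' ≠ 0 := sub_ne_zero.mpr hcc
    have haane : a - a' ≠ 0 := sub_ne_zero.mpr haa
    have e12 : (z1 - z2) * (p3 - p1) = c - c' := by
      linear_combination ha1 - ha2 - hc1 + hc2
    have e34 : (z3 - z4) * (p3 - p1) = c - c' := by
      linear_combination ha3 - ha4 - hc3 + hc4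
    have e13 : (z1 - z3) * (p1 - p3) = a - a' := by
      linear_combination hc1 - hc3 - ha1 + ha3
    have e24 : (z2 - z4) * (p1 - p3) = a - a' := by
      linear_combination hc2 - hc4 - ha2 + ha4
    have hz12 : z1 - z2 ≠ 0 := by
      intro h; rw [h, zero_mul] at e12; exact hccne e12.symm
    have hz34 : z3 - z4 ≠ 0 := by
      intro h; rw [h, zero_mul] at e34; exact hccne e34.symm
    have hz13 : z1 - z3 ≠ 0 := by
      intro h; rw [h, zero_mul] at e13; exact haane e13.symm
    have hz24 : z2 - z4 ≠ 0 := by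
      intro h; rw [h, zero_mul] at e24; exact haane e24.symm
    have hz : z1 - z2 = z3 - z4 := mul_right_cancel₀ hp31 (e12.trans e34.symm)
    -- b differences
    have hb12 : (z1 * p2 + w1) - (z2 * p2 + w2) = (z1 - z2) * (p2 - p1) := by
      linear_combination ha2 - ha1
    have hb34 : (z3 * p2 + w3) - (z4 * p2 + w4) = (z3 - z4) * (p2 - p1) := by
      linear_combination ha4 - ha3
    have hb13 : (z1 * p2 + w1) - (z3 * p2 + w3) = (z1 - z3) * (p2 - p3) := by
      linear_combination hc3 - hc1
    have hb24 : (z2 * p2 + w2) - (z4 * p2 + w4) = (z2 - z4) * (p2 - p3) := by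
      linear_combination hc4 - hc2
    have hbpar : (z1 * p2 + w1) - (z2 * p2 + w2) = (z3 * p2 + w3) - (z4 * p2 + w4) := by
      rw [hb12, hb34, hz]
    have d12 : z1 * p2 + w1 ≠ z2 * p2 + w2 := by
      intro h
      rw [sub_eq_zero.mpr h] at hb12
      exact mul_ne_zero hz12 hp21 hb12.symm
    have d34 : z3 * p2 + w3 ≠ z4 * p2 + w4 := by
      intro h
      rw [sub_eq_zero.mpr h] at hb34
      exact mul_ne_zero hz34 hp21 hb34.symm
    have d13 : z1 * p2 + w1 ≠ z3 * p2 + w3 := by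
      intro h
      rw [sub_eq_zero.mpr h] at hb13
      exact mul_ne_zero hz13 hp23 hb13.symm
    have d24 : z2 * p2 + w2 ≠ z4 * p2 + w4 := by
      intro h
      rw [sub_eq_zero.mpr h] at hb24
      exact mul_ne_zero hz24 hp23 hb24.symm
    -- case analysis
    by_cases h14 : z1 * p2 + w1 = z4 * p2 + w4
    · -- b1 = b4 : then b1 is midpoint of b2 and b3
      have hmid : (z1 * p2 + w1) - (z2 * p2 + w2) = (z3 * p2 + w3) - (z1 * p2 + w1) := by
        rw [hbpar, h14]
      have hcol := collinear_of_mid' hmid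
      have d23 : z2 * p2 + w2 ≠ z3 * p2 + w3 := by
        intro h
        rw [h] at hmid
        have : z1 * p2 + w1 = z3 * p2 + w3 := by linear_combination hmid / 2
        exact d13 this
      set S : Finset ℂ := {z2 * p2 + w2, z1 * p2 + w1, z3 * p2 + w3} with hSdef
      have hScard : S.card = 3 :=
        Finset.card_eq_three.mpr ⟨_, _, _, Ne.symm d12, d23, d13, rfl⟩
      have hSsub : S ⊆ A := by
        intro x hx
        rw [hSdef] at hx
        simp only [Finset.mem_insert, Finset.mem_singleton] at hx
        rcases hx with rfl | rfl | rfl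
        · exact hb2
        · exact hb1
        · exact hb3
      have := hAfree.1 S hSsub (by rw [hSdef]; simpa using hcol)
      omega
    · by_cases h23' : z2 * p2 + w2 = z3 * p2 + w3
      · -- b2 = b3 : then b2 is midpoint of b1 and b4
        have hmid : (z2 * p2 + w2) - (z1 * p2 + w1) = (z4 * p2 + w4) - (z2 * p2 + w2) := by
          linear_combination -hbpar + h23'
        have hcol := collinear_of_mid' hmid
        set S : Finset ℂ := {z1 * p2 + w1, z2 * p2 + w2, z4 * p2 + w4} with hSdef
        have hScard : S.card = 3 :=
          Finset.card_eq_three.mpr ⟨_, _, _, d12, h14, d24, rfl⟩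
        have hSsub : S ⊆ A := by
          intro x hx
          rw [hSdef] at hx
          simp only [Finset.mem_insert, Finset.mem_singleton] at hx
          rcases hx with rfl | rfl | rfl
          · exact hb1
          · exact hb2
          · exact hb4
        have := hAfree.1 S hSsub (by rw [hSdef]; simpa using hcol)
        omega
      · -- all four distinct: parallelogram
        exact hAfree.2 ⟨z2 * p2 + w2, hb2, z1 * p2 + w1, hb1, z4 * p2 + w4, hb4,
          z3 * p2 + w3, hb3, Ne.symm d12, d24, h23', h14,
          d13, Ne.symm d34, by rw [hbpar]⟩
  -- counting
  have hn1 : 1 ≤ A.card := by omega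
  have hcount := card_le_of_k22free A E hn1 hEA hE22
  rw [hSP, ← hcard]
  rw [hAcard] at hcount
  exact hcount
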